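/- Let k ≥ 2 and let h, h′ be integers with 1 ≤ h, h′ < k, gcd(h,k) = 1, and h·h′ ≡ 1 (mod k). Then C_{h′,k} = (k·log k)/12 − (k/2)·b_{h,k}. -/

import Mathlib

/-- The generalized Dedekind sum `C_{h,k} = (k/2) ∑_{j=1}^{k-1} B₂(j/k) log|2 sin(π j h/k)|`,
where `B₂(x) = x² - x + 1/6`. -/
noncomputable def Chk (h k : ℕ) : ℝ :=
  ((k : ℝ) / 2) * ∑ j ∈ Finset.Icc 1 (k - 1),
    (((j : ℝ) / k) ^ 2 - (j : ℝ) / k + 1 / 6) *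
      Real.log |2 * Real.sin (Real.pi * j * h / k)|

/-- The generalized Dedekind sum
`b_{h,k} = ∑_{j=1}^{k-1} {hj/k}(1 - {hj/k}) log|2 sin(π j/k)|`,
where `{x}` is the fractional part of `x`. -/
noncomputable def bhk (h k : ℕ) : ℝ :=
  ∑ j ∈ Finset.Icc 1 (k - 1),
    Int.fract ((h : ℝ) * j / k) * (1 - Int.fract ((h : ℝ) * j / k)) *
      Real.log |2 * Real.sin (Real.pi * j / k)|

private lemma abs_one_sub_exp' (x : ℝ) :
    ‖1 - Complex.exp (x * Complex.I)‖ = 2 * |Real.sin (x / 2)| := by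
  have h : (1 : ℂ) - Complex.exp (x * Complex.I) =
      Complex.exp ((x / 2 : ℝ) * Complex.I) * (-2 * Complex.I * Complex.sin ((x/2 : ℝ))) := by
    rw [Complex.sin]
    have e1 : Complex.exp (↑(x/2) * Complex.I) * Complex.exp (-↑(x/2) * Complex.I) = 1 := by
      rw [← Complex.exp_add]; ring_nf; exact Complex.exp_zero
    have e2 : Complex.exp (↑(x/2) * Complex.I) * Complex.exp (↑(x/2) * Complex.I)
        = Complex.exp (↑x * Complex.I) := by
      rw [← Complex.exp_add]; push_cast; ring_nf
    calc (1 : ℂ) - Complex.exp (x * Complex.I)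
        = Complex.exp (↑(x/2) * Complex.I) * Complex.exp (-↑(x/2) * Complex.I)
          - Complex.exp (↑(x/2) * Complex.I) * Complex.exp (↑(x/2) * Complex.I) := by rw [e1, e2]
      _ = _ := by ring_nf; rw [Complex.I_sq]; ring
  rw [h, norm_mul, Complex.norm_exp]
  simp [Complex.mul_re, Complex.norm_real, abs_mul]
  rw [show ((x:ℂ)/2) = ((x/2 : ℝ):ℂ) by push_cast; ring, ← Complex.ofReal_sin, Complex.norm_real, Real.norm_eq_abs]

private lemma prod_sin' (k : ℕ) (hk : 2 ≤ k) :
    ∏ j ∈ Finset.Icc 1 (k - 1), (2 * Real.sin (Real.pi * j / k)) = k := by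
  obtain ⟨n, rfl⟩ : ∃ n, k = n + 1 := ⟨k - 1, by omega⟩
  have hμ := Complex.isPrimitiveRoot_exp (n+1) (by omega)
  have hprod := hμ.prod_one_sub_pow_eq_order
  push_cast at hprod
  have key : ∀ j ∈ Finset.range n,
      ‖1 - Complex.exp (2 * Real.pi * Complex.I / ((n:ℂ)+1)) ^ (j+1)‖
        = 2 * Real.sin (Real.pi * ((j:ℝ)+1) / ((n:ℝ)+1)) := by
    intro j hj
    simp only [Finset.mem_range] at hj
    rw [← Complex.exp_nat_mul]
    rw [show ((j+1 : ℕ):ℂ) * (2 * (Real.pi:ℂ) * Complex.I / ((n:ℂ)+1))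
        = ((2 * Real.pi * ((j:ℝ)+1) / ((n:ℝ)+1) : ℝ) : ℂ) * Complex.I by
      push_cast; field_simp]
    rw [abs_one_sub_exp']
    have hjn : ((j:ℝ)+1) < (n:ℝ)+1 := by
      have : (j:ℝ) < n := by exact_mod_cast hj
      linarith
    have hpos : 0 < Real.sin (2 * Real.pi * ((j:ℝ)+1) / ((n:ℝ)+1) / 2) := by
      apply Real.sin_pos_of_pos_of_lt_pi
      · have : (0:ℝ) < (j:ℝ)+1 := by positivity
        positivity
      · rw [div_lt_iff₀ (by positivity : (0:ℝ) < 2), div_lt_iff₀ (by positivity)]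
        nlinarith [Real.pi_pos]
    rw [abs_of_pos hpos]
    congr 1
    ring
  have habs : ∏ j ∈ Finset.range n, (2 * Real.sin (Real.pi * ((j:ℝ)+1) / ((n:ℝ)+1))) = ((n:ℝ)+1) := by
    rw [← Finset.prod_congr rfl key, ← norm_prod, hprod]
    rw [show ((n:ℂ)+1) = (((n:ℝ)+1 : ℝ) : ℂ) by push_cast; ring, Complex.norm_real, Real.norm_eq_abs,
      abs_of_pos (by positivity)]
  rw [show Finset.Icc 1 (n+1-1) = Finset.Ico 1 (n+1) by rw [Finset.Ico_add_one_right_eq_Icc]; rfl,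
    Finset.prod_Ico_eq_prod_range]
  simp only [Nat.add_sub_cancel]
  refine Eq.trans (Finset.prod_congr rfl fun j hj => ?_) (habs.trans (by push_cast; ring))
  congr 2
  push_cast
  ring

private lemma sin_pos_aux (k j : ℕ) (hk : 2 ≤ k) (hj : j ∈ Finset.Icc 1 (k-1)) :
    0 < 2 * Real.sin (Real.pi * j / k) := by
  simp only [Finset.mem_Icc] at hj
  have h1 : (1:ℝ) ≤ (j:ℝ) := by exact_mod_cast hj.1
  have h2 : (j:ℝ) < k := by
    have : j < k := by omega
    exact_mod_cast this
  have : 0 < Real.sin (Real.pi * j / k) := by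
    apply Real.sin_pos_of_pos_of_lt_pi
    · have : (0:ℝ) < k := by positivity
      positivity
    · rw [div_lt_iff₀ (by positivity : (0:ℝ) < k)]
      nlinarith [Real.pi_pos]
  linarith

private lemma sum_log_sin' (k : ℕ) (hk : 2 ≤ k) :
    ∑ j ∈ Finset.Icc 1 (k - 1), Real.log |2 * Real.sin (Real.pi * j / k)| = Real.log k := by
  rw [Finset.sum_congr rfl (fun j hj => by rw [abs_of_pos (sin_pos_aux k j hk hj)] :
      ∀ j ∈ Finset.Icc 1 (k-1), Real.log |2 * Real.sin (Real.pi * j / k)|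
        = Real.log (2 * Real.sin (Real.pi * j / k))),
    ← Real.log_prod (fun j hj => (sin_pos_aux k j hk hj).ne'), prod_sin' k hk]

private lemma mod_roundtrip (h h' k : ℕ) (hinv : h * h' ≡ 1 [MOD k]) :
    ∀ j < k, h' * (h * j % k) % k = j := by
  intro j hj
  have h1 : h' * (h * j % k) ≡ h' * (h * j) [MOD k] := (Nat.mod_modEq (h * j) k).mul_left h'
  have h2 : h' * (h * j) = (h * h') * j := by ring
  have h3 : (h * h') * j ≡ 1 * j [MOD k] := hinv.mul_right j
  have := h1.trans (h2 ▸ h3)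
  calc h' * (h * j % k) % k = (1 * j) % k := this
    _ = j := by rw [one_mul, Nat.mod_eq_of_lt hj]

private lemma fract_eq' (h k : ℕ) (hk : 2 ≤ k) (j : ℕ) :
    Int.fract ((h : ℝ) * j / k) = ((h * j % k : ℕ) : ℝ) / k := by
  have hkR : (0:ℝ) < k := by positivity
  have hdm : k * (h * j / k) + h * j % k = h * j := Nat.div_add_mod (h * j) k
  have heq : (h : ℝ) * j / k = ((h * j / k : ℕ) : ℝ) + ((h * j % k : ℕ) : ℝ) / k := by
    have hcast : (h : ℝ) * j = k * ((h * j / k : ℕ) : ℝ) + ((h * j % k : ℕ) : ℝ) := by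
      exact_mod_cast hdm.symm
    field_simp
    linear_combination hcast
  rw [heq, Int.fract_natCast_add, Int.fract_eq_self.2]
  constructor
  · positivity
  · rw [div_lt_one hkR]
    exact_mod_cast Nat.mod_lt _ (by omega)

theorem Chk_bhk_relation (h h' k : ℕ) (hk : 2 ≤ k)
    (hh1 : 1 ≤ h) (hh : h < k) (hh'1 : 1 ≤ h') (hh' : h' < k)
    (hgcd : Nat.gcd h k = 1) (hinv : h * h' ≡ 1 [MOD k]) :
    Chk h' k = (k : ℝ) * Real.log k / 12 - ((k : ℝ) / 2) * bhk h k := by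
  have hk0 : k ≠ 0 := by omega
  have hkR : (0:ℝ) < k := by positivity
  have hinv' : h' * h ≡ 1 [MOD k] := by rwa [mul_comm] at hinv
  have hcoh : Nat.Coprime k h := Nat.coprime_comm.mp hgcd
  have hcoh' : Nat.Coprime k h' :=
    Nat.coprime_comm.mp (Nat.coprime_of_mul_modEq_one h hinv')
  -- membership lemma
  have hmem : ∀ (a b : ℕ), Nat.Coprime k a → ∀ j ∈ Finset.Icc 1 (k-1), a * j % k ∈ Finset.Icc 1 (k-1) := by
    intro a b hco j hj
    simp only [Finset.mem_Icc] at hj ⊢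
    have hlt : a * j % k < k := Nat.mod_lt _ (by omega)
    have hne : a * j % k ≠ 0 := by
      intro h0
      have hdvd : k ∣ a * j := Nat.dvd_of_mod_eq_zero h0
      have : k ∣ j := (Nat.Coprime.dvd_of_dvd_mul_left hco) hdvd
      have := Nat.le_of_dvd (by omega) this
      omega
    omega
  -- reindexed sum
  have key : ∑ j ∈ Finset.Icc 1 (k-1),
        (Int.fract ((h:ℝ) * j / k) ^ 2 - Int.fract ((h:ℝ) * j / k) + 1/6) *
          Real.log |2 * Real.sin (Real.pi * j / k)|
      = ∑ m ∈ Finset.Icc 1 (k-1),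
        (((m : ℝ) / k) ^ 2 - (m : ℝ) / k + 1 / 6) *
          Real.log |2 * Real.sin (Real.pi * m * h' / k)| := by
    apply Finset.sum_nbij' (fun j => h * j % k) (fun m => h' * m % k)
    · exact hmem h h' hcoh
    · exact hmem h' h hcoh'
    · intro j hj
      simp only [Finset.mem_Icc] at hj
      exact mod_roundtrip h h' k hinv j (by omega)
    · intro m hm
      simp only [Finset.mem_Icc] at hm
      exact mod_roundtrip h' h k hinv' m (by omega)
    · intro j hj
      simp only [Finset.mem_Icc] at hj
      have hjk : j < k := by omega
      rw [fract_eq' h k hk j]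
      congr 2
      -- |sin (π * (h*j%k) * h' / k)| = |sin (π * j / k)|
      set m := h * j % k with hm
      have hmh' : m * h' % k = j := by
        rw [hm, mul_comm]
        exact mod_roundtrip h h' k hinv j hjk
      have hdm : k * (m * h' / k) + j = m * h' := by
        conv_rhs => rw [← Nat.div_add_mod (m * h') k, hmh']
      set q := m * h' / k with hq
      have harg : Real.pi * m * h' / k = Real.pi * j / k + q * Real.pi := by
        have hc : (m : ℝ) * h' = k * q + j := by exact_mod_cast hdm.symm
        field_simp
        linear_combination hc
      rw [harg, Real.sin_add_nat_mul_pi]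
      simp [abs_mul]
  -- put everything together
  unfold Chk bhk
  rw [← key]
  have split : ∀ j ∈ Finset.Icc 1 (k-1),
      (Int.fract ((h:ℝ) * j / k) ^ 2 - Int.fract ((h:ℝ) * j / k) + 1/6) *
          Real.log |2 * Real.sin (Real.pi * j / k)|
        = (1/6) * Real.log |2 * Real.sin (Real.pi * j / k)|
          - Int.fract ((h:ℝ) * j / k) * (1 - Int.fract ((h:ℝ) * j / k)) *
              Real.log |2 * Real.sin (Real.pi * j / k)| := by
    intro j hj
    ring
  rw [Finset.sum_congr rfl split, Finset.sum_sub_distrib, ← Finset.mul_sum, sum_log_sin' k hk]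
  ring
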